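/- (Nijenhuis tensor contraction) Let g be a Lie algebra over a commutative ring and let N : g → g be a linear map whose Nijenhuis torsion vanishes, i.e. [Nx,Ny] − N([Nx,y] + [x,Ny] − N[x,y]) = 0 for all x,y ∈ g. Then the contracted bracket [x,y]_N := [Nx,y] + [x,Ny] − N[x,y] is again a Lie bracket on g (it is bilinear, skew-symmetric and satisfies the Jacobi identity), and N is a homomorphism of Lie algebras from (g,[·,·]_N) to (g,[·,·]): [Nx,Ny] = N([x,y]_N) for all x,y. -/
import Mathlib


/-- The contracted bracket `[x,y]_N = [Nx,y] + [x,Ny] − N[x,y]` associated to a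
linear endomorphism `N` of a Lie algebra. -/
def contractedBracket {R L : Type*} [CommRing R] [LieRing L] [LieAlgebra R L]
    (N : L →ₗ[R] L) (x y : L) : L :=
  ⁅N x, y⁆ + ⁅x, N y⁆ - N ⁅x, y⁆

/-- (Nijenhuis tensor contraction.) If `N : g → g` is a linear map on a Lie
algebra `g` whose Nijenhuis torsion vanishes, then the contracted bracket
`[x,y]_N = [Nx,y] + [x,Ny] − N[x,y]` is again a Lie bracket (bilinear,
skew-symmetric, Jacobi identity), and `N` is a homomorphism of Lie algebras
from `(g,[·,·]_N)` to `(g,[·,·])`: `[Nx,Ny] = N([x,y]_N)`. -/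
theorem nijenhuis_contraction {R L : Type*} [CommRing R] [LieRing L]
    [LieAlgebra R L] (N : L →ₗ[R] L)
    (hN : ∀ x y : L, ⁅N x, N y⁆ - N (⁅N x, y⁆ + ⁅x, N y⁆ - N ⁅x, y⁆) = 0) :
    -- bilinearity
    (∀ x : L, IsLinearMap R (contractedBracket N x)) ∧
    (∀ y : L, IsLinearMap R fun x => contractedBracket N x y) ∧
    -- skew-symmetry
    (∀ x y : L, contractedBracket N x y = - contractedBracket N y x) ∧
    -- Jacobi identity
    (∀ x y z : L, contractedBracket N (contractedBracket N x y) z =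
      contractedBracket N x (contractedBracket N y z)
        - contractedBracket N y (contractedBracket N x z)) ∧
    -- N is a homomorphism from (g, [·,·]_N) to (g, [·,·])
    (∀ x y : L, ⁅N x, N y⁆ = N (contractedBracket N x y)) := by
  have hhom : ∀ x y : L, N (⁅N x, y⁆ + ⁅x, N y⁆ - N ⁅x, y⁆) = ⁅N x, N y⁆ := by
    intro x y
    exact (sub_eq_zero.mp (hN x y)).symm
  refine ⟨?_, ?_, ?_, ?_, ?_⟩
  · intro x
    constructor
    · intro a b
      simp only [contractedBracket, lie_add, add_lie, map_add]
      abel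
    · intro c a
      simp only [contractedBracket, lie_smul, smul_lie, map_smul, smul_sub, smul_add]
  · intro y
    constructor
    · intro a b
      simp only [contractedBracket, lie_add, add_lie, map_add]
      abel
    · intro c a
      simp only [contractedBracket, lie_smul, smul_lie, map_smul, smul_sub, smul_add]
  · intro x y
    simp only [contractedBracket]
    rw [← lie_skew y (N x), ← lie_skew (N y) x, ← lie_skew y x]
    simp only [map_neg]
    abel
  · intro x y z
    simp only [contractedBracket]
    rw [hhom x y, hhom y z, hhom x z]
    simp only [lie_add, add_lie, lie_sub, sub_lie, map_add, map_sub]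
    rw [← hhom ⁅x, y⁆ z, ← hhom x ⁅y, z⁆, ← hhom y ⁅x, z⁆]
    simp only [lie_add, add_lie, lie_sub, sub_lie, map_add, map_sub, lie_lie]
    abel
  · intro x y
    exact (hhom x y).symm
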